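/- For α ∈ ℕ with α ≥ 1 and n ≥ 0, the (i,j)-entry of the inverse of the (n+1)×(n+1) matrix (1/F_{α+i+j})_{0≤i,j≤n} equals (-1)^{n(α+i+j) - binom(i,2) - binom(j,2)} · F_{α+i+j} · binom(α+n+i, n-j)_F · binom(α+n+j, n-i)_F · binom(α+i+j-1, i)_F · binom(α+i+j-1, j)_F. In particular all entries of the inverse matrix are integers. -/

import Mathlib

open Finset Polynomial

variable {K : Type*} [Field K]

lemma lagrange_sum {N : ℕ} (x y : Fin N → K) (hy : Function.Injective y)
    (hxy : ∀ i j, x i ≠ y j) (i l : Fin N) :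
    ∑ j : Fin N, (x i - y j)⁻¹ *
        ((∏ k ∈ Finset.univ.erase l, (y j - x k)) / ∏ k ∈ Finset.univ.erase j, (y j - y k)) =
      (∏ k ∈ Finset.univ.erase l, (x i - x k)) / ∏ k : Fin N, (x i - y k) := by
  classical
  set p : K[X] := Lagrange.nodal (Finset.univ.erase l) x with hp
  have hinj : Set.InjOn y (Finset.univ : Finset (Fin N)) := hy.injOn
  have hdeg : p.degree < (Finset.univ : Finset (Fin N)).card := by
    rw [hp, Lagrange.degree_nodal]
    exact_mod_cast Nat.cast_lt.mpr (by
      have := Finset.card_erase_lt_of_mem (Finset.mem_univ l)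
      simpa using this)
  have h1 : p = Lagrange.interpolate Finset.univ y fun j => p.eval (y j) :=
    Lagrange.eq_interpolate hinj hdeg
  have h2 : p.eval (x i) =
      (∏ k : Fin N, (x i - y k)) *
        ∑ j : Fin N, Lagrange.nodalWeight Finset.univ y j * (x i - y j)⁻¹ * p.eval (y j) := by
    conv_lhs => rw [h1]
    rw [Lagrange.eval_interpolate_not_at_node _ (fun j _ => hxy i j), Lagrange.eval_nodal]
  have hev : ∀ z, p.eval z = ∏ k ∈ Finset.univ.erase l, (z - x k) := fun z => by
    rw [hp, Lagrange.eval_nodal]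
  have hne : (∏ k : Fin N, (x i - y k)) ≠ 0 :=
    Finset.prod_ne_zero_iff.mpr fun k _ => sub_ne_zero_of_ne (hxy i k)
  rw [hev] at h2
  rw [eq_div_iff hne]
  rw [Finset.sum_mul, h2, Finset.mul_sum]
  refine Finset.sum_congr rfl fun j _ => ?_
  rw [Lagrange.nodalWeight, hev]
  rw [Finset.prod_inv_distrib]
  have hQ : (∏ k ∈ Finset.univ.erase j, (y j - y k)) ≠ 0 :=
    Finset.prod_ne_zero_iff.mpr fun k hk =>
      sub_ne_zero_of_ne fun h => (Finset.mem_erase.mp hk).1 (hy h).symm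
  field_simp

lemma cauchy_mul_eq_one {N : ℕ} (x y : Fin N → K) (hx : Function.Injective x)
    (hy : Function.Injective y) (hxy : ∀ i j, x i ≠ y j) :
    (Matrix.of fun i j : Fin N => (x i - y j)⁻¹) *
      (Matrix.of fun j l : Fin N =>
        (∏ k ∈ Finset.univ.erase l, (y j - x k)) * (∏ k : Fin N, (x l - y k)) /
          ((∏ k ∈ Finset.univ.erase j, (y j - y k)) *
            (∏ k ∈ Finset.univ.erase l, (x l - x k)))) = 1 := by
  classical
  ext i l
  rw [Matrix.mul_apply]
  have key := lagrange_sum x y hy hxy i l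
  have hXl : (∏ k ∈ Finset.univ.erase l, (x l - x k)) ≠ 0 :=
    Finset.prod_ne_zero_iff.mpr fun k hk =>
      sub_ne_zero_of_ne fun h => (Finset.mem_erase.mp hk).1 (hx h).symm
  have hne : ∀ m : Fin N, (∏ k : Fin N, (x m - y k)) ≠ 0 := fun m =>
    Finset.prod_ne_zero_iff.mpr fun k _ => sub_ne_zero_of_ne (hxy m k)
  have hsum : ∑ j : Fin N, (x i - y j)⁻¹ *
      ((∏ k ∈ Finset.univ.erase l, (y j - x k)) * (∏ k : Fin N, (x l - y k)) /
        ((∏ k ∈ Finset.univ.erase j, (y j - y k)) *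
          (∏ k ∈ Finset.univ.erase l, (x l - x k)))) =
      ((∏ k : Fin N, (x l - y k)) / (∏ k ∈ Finset.univ.erase l, (x l - x k))) *
        ∑ j : Fin N, (x i - y j)⁻¹ *
          ((∏ k ∈ Finset.univ.erase l, (y j - x k)) /
            ∏ k ∈ Finset.univ.erase j, (y j - y k)) := by
    rw [Finset.mul_sum]
    refine Finset.sum_congr rfl fun j _ => ?_
    field_simp
  simp only [Matrix.of_apply]
  rw [hsum, key]
  rcases eq_or_ne i l with rfl | hil
  · rw [Matrix.one_apply_eq]
    rw [div_mul_div_comm, mul_comm (∏ k ∈ Finset.univ.erase i, (x i - x k))]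
    exact div_self (mul_ne_zero (hne i) hXl)
  · rw [Matrix.one_apply_ne hil]
    have : (∏ k ∈ Finset.univ.erase l, (x i - x k)) = 0 :=
      Finset.prod_eq_zero (Finset.mem_erase.mpr ⟨hil, Finset.mem_univ i⟩) (by simp)
    rw [this]
    simp

open Finset Real

noncomputable def gx (α i : ℕ) : ℝ := (-1) ^ i * goldenRatio ^ (α + 2 * i)
noncomputable def gy (α j : ℕ) : ℝ := (-1) ^ j * goldenConj ^ (α + 2 * j)

section generic
variable {p q : ℝ} (hpq : p * q = -1)

private lemma genK (m : ℕ) (hpq : p * q = -1) : (-1 : ℝ) ^ m * p ^ m * q ^ m = 1 := by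
  rw [← mul_pow, ← mul_pow, mul_assoc, hpq]
  norm_num

end generic

lemma gK (m : ℕ) : (-1 : ℝ) ^ m * goldenRatio ^ m * goldenConj ^ m = 1 :=
  genK m goldenRatio_mul_goldenConj

lemma fib5 (m : ℕ) : Real.sqrt 5 * (Nat.fib m : ℝ) = goldenRatio ^ m - goldenConj ^ m := by
  rw [Real.coe_fib_eq]
  have h5 : Real.sqrt 5 ≠ 0 := by positivity
  field_simp

private lemma gen1 (α i j : ℕ) (p q c F : ℝ) (hpq : p * q = -1)
    (hF : c * F = p ^ (α + i + j) - q ^ (α + i + j)) :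
    (-1) ^ i * p ^ (α + 2 * i) - (-1) ^ j * q ^ (α + 2 * j) =
      c * F * (-1) ^ (i + j) * p ^ i * q ^ j := by
  have k1 := genK i hpq
  have k2 := genK j hpq
  linear_combination (-((-1 : ℝ)) ^ (i + j) * p ^ i * q ^ j) * hF
    - (-1 : ℝ) ^ i * p ^ (α + 2 * i) * k2 + (-1 : ℝ) ^ j * q ^ (α + 2 * j) * k1

lemma gsub1 (α i j : ℕ) : gx α i - gy α j =
    Real.sqrt 5 * (Nat.fib (α + i + j) : ℝ) * (-1) ^ (i + j) *
      goldenRatio ^ i * goldenConj ^ j :=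
  gen1 α i j _ _ _ _ goldenRatio_mul_goldenConj (fib5 _)

private lemma gen2 (α k m : ℕ) (p q c F : ℝ) (hpq : p * q = -1)
    (hF : c * F = p ^ (m + 1) - q ^ (m + 1)) :
    (-1) ^ (k + m + 1) * p ^ (α + 2 * (k + m + 1)) - (-1) ^ k * p ^ (α + 2 * k) =
      (-1) ^ (k + m + 1) * p ^ (α + 2 * k + m + 1) * (c * F) := by
  have k1 := genK (m + 1) hpq
  linear_combination (-((-1 : ℝ)) ^ (k + m + 1) * p ^ (α + 2 * k + m + 1)) * hF
    + (-1 : ℝ) ^ k * p ^ (α + 2 * k) * k1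

lemma gsub2 (α k m : ℕ) : gx α (k + m + 1) - gx α k =
    (-1) ^ (k + m + 1) * goldenRatio ^ (α + 2 * k + m + 1) *
      (Real.sqrt 5 * (Nat.fib (m + 1) : ℝ)) :=
  gen2 α k m _ _ _ _ goldenRatio_mul_goldenConj (fib5 _)

private lemma gen3 (α k m : ℕ) (p q c F : ℝ) (hpq : p * q = -1)
    (hF : c * F = p ^ (m + 1) - q ^ (m + 1)) :
    (-1) ^ (k + m + 1) * q ^ (α + 2 * (k + m + 1)) - (-1) ^ k * q ^ (α + 2 * k) =
      -((-1) ^ (k + m + 1) * q ^ (α + 2 * k + m + 1) * (c * F)) := by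
  have k1 := genK (m + 1) (by linarith [hpq] : q * p = -1)
  linear_combination (((-1 : ℝ)) ^ (k + m + 1) * q ^ (α + 2 * k + m + 1)) * hF
    + (-1 : ℝ) ^ k * q ^ (α + 2 * k) * k1

lemma gsub3 (α k m : ℕ) : gy α (k + m + 1) - gy α k =
    -((-1) ^ (k + m + 1) * goldenConj ^ (α + 2 * k + m + 1) *
      (Real.sqrt 5 * (Nat.fib (m + 1) : ℝ))) :=
  gen3 α k m _ _ _ _ goldenRatio_mul_goldenConj (fib5 _)

open Finset

/-- The Fibonomial coefficient `∏_{i=1}^k F_{m-i+1}/F_i`, as a real number. -/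
noncomputable def fibinom (m k : ℕ) : ℝ :=
  ∏ j ∈ Finset.range k, (Nat.fib (m - j) : ℝ) / (Nat.fib (j + 1) : ℝ)

/-- Fibtorial: product of the first `m` positive-index Fibonacci numbers, as a real. -/
noncomputable def QF (m : ℕ) : ℝ := ∏ r ∈ Finset.range m, (Nat.fib (r + 1) : ℝ)

/-- Product of consecutive Fibonacci numbers starting at index `a`. -/
noncomputable def PF (a m : ℕ) : ℝ := ∏ k ∈ Finset.range m, (Nat.fib (a + k) : ℝ)

lemma QF_pos (m : ℕ) : 0 < QF m :=
  Finset.prod_pos fun r _ => by exact_mod_cast Nat.fib_pos.mpr (Nat.succ_pos r)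

lemma QF_ne (m : ℕ) : QF m ≠ 0 := (QF_pos m).ne'

lemma PF_pos {a : ℕ} (ha : 1 ≤ a) (m : ℕ) : 0 < PF a m :=
  Finset.prod_pos fun r _ => by exact_mod_cast Nat.fib_pos.mpr (by omega)

lemma fib_cast_pos {a : ℕ} (ha : 1 ≤ a) : (0 : ℝ) < (Nat.fib a : ℝ) := by
  exact_mod_cast Nat.fib_pos.mpr ha

lemma fibinom_eq (m k : ℕ) :
    fibinom m k = (∏ r ∈ Finset.range k, (Nat.fib (m - r) : ℝ)) / QF k := by
  rw [fibinom, QF, Finset.prod_div_distrib]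

lemma fibinom_mul_QF (m k : ℕ) :
    fibinom m k * QF k = ∏ r ∈ Finset.range k, (Nat.fib (m - r) : ℝ) := by
  rw [fibinom_eq, div_mul_cancel₀ _ (QF_ne k)]

/-- The main row-product identity used to expand the fibonomials into `PF`. -/
lemma grp (α n j l : ℕ) (hα : 1 ≤ α) (hj : j ≤ n) :
    fibinom (α + n + l) (n - j) * fibinom (α + j + l - 1) j *
      (QF (n - j) * QF j * (Nat.fib (α + l + j) : ℝ)) = PF (α + l) (n + 1) := by
  have h1 : fibinom (α + n + l) (n - j) * QF (n - j) =
      ∏ r ∈ Finset.range (n - j), (Nat.fib (α + n + l - r) : ℝ) := fibinom_mul_QF _ _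
  have h2 : fibinom (α + j + l - 1) j * QF j =
      ∏ r ∈ Finset.range j, (Nat.fib (α + j + l - 1 - r) : ℝ) := fibinom_mul_QF _ _
  have e1 : ∏ r ∈ Finset.range (n - j), (Nat.fib (α + n + l - r) : ℝ) =
      ∏ r ∈ Finset.range (n - j), (Nat.fib (α + l + ((j + 1) + r)) : ℝ) := by
    rw [← Finset.prod_range_reflect]
    refine Finset.prod_congr rfl fun r hr => ?_
    rw [Finset.mem_range] at hr
    rw [show α + n + l - (n - j - 1 - r) = α + l + ((j + 1) + r) from by omega]
  have e2 : ∏ r ∈ Finset.range j, (Nat.fib (α + j + l - 1 - r) : ℝ) =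
      ∏ r ∈ Finset.range j, (Nat.fib (α + l + r) : ℝ) := by
    rw [← Finset.prod_range_reflect]
    refine Finset.prod_congr rfl fun r hr => ?_
    rw [Finset.mem_range] at hr
    rw [show α + j + l - 1 - (j - 1 - r) = α + l + r from by omega]
  have e3 : PF (α + l) (n + 1) =
      (∏ r ∈ Finset.range (j + 1), (Nat.fib (α + l + r) : ℝ)) *
        ∏ r ∈ Finset.range (n - j), (Nat.fib (α + l + ((j + 1) + r)) : ℝ) := by
    rw [PF, show n + 1 = (j + 1) + (n - j) by omega, Finset.prod_range_add]
  calc fibinom (α + n + l) (n - j) * fibinom (α + j + l - 1) j *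
        (QF (n - j) * QF j * (Nat.fib (α + l + j) : ℝ))
      = (fibinom (α + n + l) (n - j) * QF (n - j)) *
        ((fibinom (α + j + l - 1) j * QF j) * (Nat.fib (α + l + j) : ℝ)) := by ring
    _ = (∏ r ∈ Finset.range (n - j), (Nat.fib (α + l + ((j + 1) + r)) : ℝ)) *
        ((∏ r ∈ Finset.range j, (Nat.fib (α + l + r) : ℝ)) * (Nat.fib (α + l + j) : ℝ)) := by
        rw [h1, h2, e1, e2]
    _ = PF (α + l) (n + 1) := by
        rw [e3, ← Finset.prod_range_succ]
        ring

lemma fibinom_zero_right (m : ℕ) : fibinom m 0 = 1 := by simp [fibinom]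

lemma fibinom_eq_zero {m k : ℕ} (h : m < k) : fibinom m k = 0 := by
  rw [fibinom]
  refine Finset.prod_eq_zero (Finset.mem_range.mpr h) ?_
  simp [Nat.sub_self]

lemma fibinom_succ_succ_mul (m k : ℕ) :
    fibinom (m + 1) (k + 1) * (QF k * (Nat.fib (k + 1) : ℝ)) =
      (Nat.fib (m + 1) : ℝ) * (fibinom m k * QF k) := by
  have h1 := fibinom_mul_QF (m + 1) (k + 1)
  have h2 := fibinom_mul_QF m k
  have hq : QF (k + 1) = QF k * (Nat.fib (k + 1) : ℝ) := Finset.prod_range_succ _ _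
  rw [← hq, h1, h2]
  rw [Finset.prod_range_succ', Nat.sub_zero]
  rw [show (∏ r ∈ Finset.range k, (Nat.fib (m + 1 - (r + 1)) : ℝ)) =
      ∏ r ∈ Finset.range k, (Nat.fib (m - r) : ℝ) from
    Finset.prod_congr rfl fun r _ => by rw [show m + 1 - (r + 1) = m - r from by omega]]
  ring

lemma fibinom_succ_succ (m k : ℕ) :
    fibinom (m + 1) (k + 1) * (Nat.fib (k + 1) : ℝ) = (Nat.fib (m + 1) : ℝ) * fibinom m k := by
  have h := fibinom_succ_succ_mul m k
  have hq := QF_ne k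
  exact mul_right_cancel₀ hq (by linear_combination h)

lemma fibinom_self (m : ℕ) : fibinom m m = 1 := by
  induction m with
  | zero => simp [fibinom]
  | succ m ih =>
    have h := fibinom_succ_succ m m
    have hf : (0 : ℝ) < (Nat.fib (m + 1) : ℝ) := fib_cast_pos (by omega)
    rw [ih] at h
    have := mul_right_cancel₀ hf.ne' (h.trans (by ring) : fibinom (m + 1) (m + 1) *
      (Nat.fib (m + 1) : ℝ) = 1 * (Nat.fib (m + 1) : ℝ))
    exact this

lemma fibinom_rec {m k : ℕ} (h : k + 1 ≤ m) :
    fibinom (m + 1) (k + 1) = (Nat.fib (k + 2) : ℝ) * fibinom m (k + 1) +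
      (Nat.fib (m - k - 1) : ℝ) * fibinom m k := by
  have hfib : Nat.fib (m + 1) = Nat.fib (m - k - 1) * Nat.fib (k + 1) +
      Nat.fib (m - k) * Nat.fib (k + 2) := by
    have := Nat.fib_add (m - k - 1) (k + 1)
    rw [show m - k - 1 + (k + 1) + 1 = m + 1 from by omega] at this
    rw [show m - k - 1 + 1 = m - k from by omega] at this
    exact this
  have h1 := fibinom_succ_succ m k
  have h2 : fibinom m (k + 1) * (Nat.fib (k + 1) : ℝ) * (Nat.fib (k + 2) : ℝ) =
      (Nat.fib (m - k) : ℝ) * fibinom m k * (Nat.fib (k + 2) : ℝ) := by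
    have h3 : fibinom m (k + 1) * QF (k + 1) =
        (fibinom m k * QF k) * (Nat.fib (m - k) : ℝ) := by
      rw [fibinom_mul_QF, fibinom_mul_QF, Finset.prod_range_succ]
    have hq := QF_ne k
    have hq1 : QF (k + 1) = QF k * (Nat.fib (k + 1) : ℝ) := Finset.prod_range_succ _ _
    rw [hq1] at h3
    have := mul_right_cancel₀ hq (by linear_combination h3 :
      fibinom m (k + 1) * (Nat.fib (k + 1) : ℝ) * QF k =
        ((Nat.fib (m - k) : ℝ) * fibinom m k) * QF k)
    rw [this]
  have hk1 : ((Nat.fib (k + 1) : ℝ)) ≠ 0 := (fib_cast_pos (by omega)).ne'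
  apply mul_right_cancel₀ hk1
  rw [h1]
  have : ((Nat.fib (m + 1) : ℕ) : ℝ) = (Nat.fib (m - k - 1) : ℝ) * (Nat.fib (k + 1) : ℝ) +
      (Nat.fib (m - k) : ℝ) * (Nat.fib (k + 2) : ℝ) := by exact_mod_cast hfib
  rw [this]
  linear_combination -h2

lemma fibinom_int (m k : ℕ) : ∃ z : ℤ, fibinom m k = (z : ℝ) := by
  induction m generalizing k with
  | zero =>
    cases k with
    | zero => exact ⟨1, by simp [fibinom_zero_right]⟩
    | succ k => exact ⟨0, by rw [fibinom_eq_zero (by omega)]; simp⟩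
  | succ m ih =>
    cases k with
    | zero => exact ⟨1, by simp [fibinom_zero_right]⟩
    | succ k =>
      rcases lt_trichotomy m k with h | rfl | h
      · exact ⟨0, by rw [fibinom_eq_zero (by omega)]; simp⟩
      · exact ⟨1, by rw [fibinom_self]; simp⟩
      · obtain ⟨z1, hz1⟩ := ih (k + 1)
        obtain ⟨z2, hz2⟩ := ih k
        refine ⟨(Nat.fib (k + 2) : ℤ) * z1 + (Nat.fib (m - k - 1) : ℤ) * z2, ?_⟩
        rw [fibinom_rec (by omega), hz1, hz2]
        push_cast
        ring

/-! ### Product expansions -/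

/-- Sum of `k` over `range m`. -/
def SS (m : ℕ) : ℕ := ∑ k ∈ Finset.range m, k

lemma sum_shift (m a : ℕ) : ∑ k ∈ Finset.range m, (a + k) = m * a + SS m := by
  rw [Finset.sum_add_distrib, Finset.sum_const, Finset.card_range, SS, smul_eq_mul]

lemma SS_add (l u : ℕ) : SS (l + u + 1) = SS l + SS u + l * u + l + u := by
  induction u with
  | zero => simp [SS, Finset.sum_range_succ]
  | succ u ih =>
    have h1 : SS (l + (u+1) + 1) = SS (l + u + 1) + (l + u + 1) := by
      rw [show l + (u+1) + 1 = (l + u + 1) + 1 from by omega, SS, Finset.sum_range_succ, SS]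
    have h2 : SS (u + 1) = SS u + u := by rw [SS, Finset.sum_range_succ, SS]
    rw [h1, ih, h2, Nat.mul_succ]
    omega

lemma SS_choose (m : ℕ) : SS m = m.choose 2 := by
  rw [SS, Finset.sum_range_id, Nat.choose_two_right]

lemma prod_expand2 (m : ℕ) (e c c' : ℕ → ℕ) (b b' d : ℝ) (F : ℕ → ℝ) :
    ∏ k ∈ Finset.range m, ((-1 : ℝ) ^ (e k) * b ^ (c k) * b' ^ (c' k) * (d * F k)) =
      (-1 : ℝ) ^ (∑ k ∈ Finset.range m, e k) * b ^ (∑ k ∈ Finset.range m, c k) *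
        b' ^ (∑ k ∈ Finset.range m, c' k) * d ^ m * ∏ k ∈ Finset.range m, F k := by
  rw [Finset.prod_mul_distrib, Finset.prod_mul_distrib, Finset.prod_mul_distrib,
    Finset.prod_mul_distrib, Finset.prod_pow_eq_pow_sum, Finset.prod_pow_eq_pow_sum,
    Finset.prod_pow_eq_pow_sum, Finset.prod_const, Finset.card_range]
  ring

/-- P1 : full column product. -/
lemma P1 (α l N : ℕ) : ∏ k ∈ Finset.range N, (gx α l - gy α k) =
    (-1 : ℝ) ^ (N * l + SS N) * goldenRatio ^ (N * l) * goldenConj ^ (SS N) *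
      Real.sqrt 5 ^ N * PF (α + l) N := by
  have h : ∀ k ∈ Finset.range N, gx α l - gy α k =
      (-1 : ℝ) ^ (l + k) * goldenRatio ^ l * goldenConj ^ k *
        (Real.sqrt 5 * (Nat.fib (α + l + k) : ℝ)) := fun k _ => by
    rw [gsub1]; ring
  rw [Finset.prod_congr rfl h, prod_expand2, sum_shift]
  rw [show (∑ k ∈ Finset.range N, l) = N * l from by
    rw [Finset.sum_const, Finset.card_range, smul_eq_mul]]
  rw [show (∑ k ∈ Finset.range N, k) = SS N from rfl]
  rw [PF]

/-- P2 : full row product. -/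
lemma P2 (α j N : ℕ) : ∏ k ∈ Finset.range N, (gx α k - gy α j) =
    (-1 : ℝ) ^ (N * j + SS N) * goldenRatio ^ (SS N) * goldenConj ^ (N * j) *
      Real.sqrt 5 ^ N * PF (α + j) N := by
  have h : ∀ k ∈ Finset.range N, gx α k - gy α j =
      (-1 : ℝ) ^ (j + k) * goldenConj ^ j * goldenRatio ^ k *
        (Real.sqrt 5 * (Nat.fib (α + j + k) : ℝ)) := fun k _ => by
    rw [gsub1, show α + k + j = α + j + k from by omega, show k + j = j + k from by omega]
    ring
  rw [Finset.prod_congr rfl h, prod_expand2, sum_shift]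
  rw [show (∑ k ∈ Finset.range N, j) = N * j from by
    rw [Finset.sum_const, Finset.card_range, smul_eq_mul]]
  rw [show (∑ k ∈ Finset.range N, k) = SS N from rfl]
  rw [PF]
  ring


lemma erase_split (l u : ℕ) : (Finset.range (l + u + 1)).erase l =
    Finset.range l ∪ Finset.Ico (l + 1) (l + u + 1) := by
  ext k
  simp only [Finset.mem_erase, Finset.mem_range, Finset.mem_union, Finset.mem_Ico]
  omega

lemma erase_disj (l u : ℕ) : Disjoint (Finset.range l) (Finset.Ico (l + 1) (l + u + 1)) := by
  rw [Finset.disjoint_left]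
  intro k hk hk'
  simp only [Finset.mem_range] at hk
  simp only [Finset.mem_Ico] at hk'
  omega

lemma refl_QF (l : ℕ) : ∏ k ∈ Finset.range l, (Nat.fib (l - k) : ℝ) = QF l := by
  rw [QF, ← Finset.prod_range_reflect]
  exact Finset.prod_congr rfl fun k hk => by
    rw [Finset.mem_range] at hk
    rw [show l - (l - 1 - k) = k + 1 from by omega]

lemma gsub2lt (α k l : ℕ) (h : k < l) : gx α l - gx α k =
    (-1 : ℝ) ^ l * goldenRatio ^ (α + l + k) * (Real.sqrt 5 * (Nat.fib (l - k) : ℝ)) := by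
  obtain ⟨m, rfl⟩ : ∃ m, l = k + m + 1 := ⟨l - k - 1, by omega⟩
  rw [gsub2, show α + 2 * k + m + 1 = α + (k + m + 1) + k from by omega,
    show k + m + 1 - k = m + 1 from by omega]

lemma gsub3lt (α k j : ℕ) (h : k < j) : gy α j - gy α k =
    (-1 : ℝ) ^ (j + 1) * goldenConj ^ (α + j + k) * (Real.sqrt 5 * (Nat.fib (j - k) : ℝ)) := by
  obtain ⟨m, rfl⟩ : ∃ m, j = k + m + 1 := ⟨j - k - 1, by omega⟩
  rw [gsub3, show α + 2 * k + m + 1 = α + (k + m + 1) + k from by omega,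
    show k + m + 1 - k = m + 1 from by omega]
  ring

lemma P3 (α l u : ℕ) : ∏ k ∈ (Finset.range (l + u + 1)).erase l, (gx α l - gx α k) =
    ((-1 : ℝ) ^ (l * l) * goldenRatio ^ (l * (α + l) + SS l) * Real.sqrt 5 ^ l * QF l) *
      ((-1 : ℝ) ^ (u * l + SS u) * goldenRatio ^ (u * (α + 2 * l + 1) + SS u) *
        Real.sqrt 5 ^ u * QF u) := by
  rw [erase_split, Finset.prod_union (erase_disj l u)]
  congr 1
  · have h : ∀ k ∈ Finset.range l, gx α l - gx α k =
        (-1 : ℝ) ^ l * goldenRatio ^ (α + l + k) * goldenConj ^ 0 *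
          (Real.sqrt 5 * (Nat.fib (l - k) : ℝ)) := fun k hk => by
      rw [Finset.mem_range] at hk
      rw [gsub2lt α k l hk]
      ring
    rw [Finset.prod_congr rfl h, prod_expand2, sum_shift]
    simp only [Finset.sum_const, Finset.card_range, smul_eq_mul, mul_zero, pow_zero]
    rw [refl_QF]
    ring
  · rw [Finset.prod_Ico_eq_prod_range, show l + u + 1 - (l + 1) = u from by omega]
    have h : ∀ r ∈ Finset.range u, gx α l - gx α (l + 1 + r) =
        (-1 : ℝ) ^ (l + r) * goldenRatio ^ (α + 2 * l + 1 + r) * goldenConj ^ 0 *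
          (Real.sqrt 5 * (Nat.fib (r + 1) : ℝ)) := fun r _ => by
      rw [show l + 1 + r = l + r + 1 from by omega, show gx α l - gx α (l + r + 1) =
        -(gx α (l + r + 1) - gx α l) from by ring, gsub2,
        show α + 2 * l + r + 1 = α + 2 * l + 1 + r from by omega]
      ring
    rw [Finset.prod_congr rfl h, prod_expand2, sum_shift, sum_shift]
    simp only [mul_zero, pow_zero, Finset.sum_const, Finset.card_range, smul_eq_mul]
    rw [show (∏ r ∈ Finset.range u, ((Nat.fib (r + 1) : ℝ))) = QF u from rfl]
    ring

lemma P4 (α j v : ℕ) : ∏ k ∈ (Finset.range (j + v + 1)).erase j, (gy α j - gy α k) =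
    ((-1 : ℝ) ^ (j * (j + 1)) * goldenConj ^ (j * (α + j) + SS j) * Real.sqrt 5 ^ j * QF j) *
      ((-1 : ℝ) ^ (v * (j + 1) + SS v) * goldenConj ^ (v * (α + 2 * j + 1) + SS v) *
        Real.sqrt 5 ^ v * QF v) := by
  rw [erase_split, Finset.prod_union (erase_disj j v)]
  congr 1
  · have h : ∀ k ∈ Finset.range j, gy α j - gy α k =
        (-1 : ℝ) ^ (j + 1) * goldenConj ^ (α + j + k) * goldenRatio ^ 0 *
          (Real.sqrt 5 * (Nat.fib (j - k) : ℝ)) := fun k hk => by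
      rw [Finset.mem_range] at hk
      rw [gsub3lt α k j hk]
      ring
    rw [Finset.prod_congr rfl h, prod_expand2, sum_shift]
    simp only [Finset.sum_const, Finset.card_range, smul_eq_mul, mul_zero, pow_zero]
    rw [refl_QF]
    ring
  · rw [Finset.prod_Ico_eq_prod_range, show j + v + 1 - (j + 1) = v from by omega]
    have h : ∀ r ∈ Finset.range v, gy α j - gy α (j + 1 + r) =
        (-1 : ℝ) ^ (j + 1 + r) * goldenConj ^ (α + 2 * j + 1 + r) * goldenRatio ^ 0 *
          (Real.sqrt 5 * (Nat.fib (r + 1) : ℝ)) := fun r _ => by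
      rw [show j + 1 + r = j + r + 1 from by omega, show gy α j - gy α (j + r + 1) =
        -(gy α (j + r + 1) - gy α j) from by ring, gsub3,
        show α + 2 * j + r + 1 = α + 2 * j + 1 + r from by omega]
      ring
    rw [Finset.prod_congr rfl h, prod_expand2, sum_shift, sum_shift]
    simp only [mul_zero, pow_zero, Finset.sum_const, Finset.card_range, smul_eq_mul]
    rw [show (∏ r ∈ Finset.range v, ((Nat.fib (r + 1) : ℝ))) = QF v from rfl]
    ring

/-! ### Node injectivity and nonvanishing -/

lemma gx_abs (α i : ℕ) : |gx α i| = goldenRatio ^ (α + 2 * i) := by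
  rw [gx, abs_mul, abs_pow, abs_neg, abs_one, one_pow, one_mul,
    abs_of_pos (pow_pos goldenRatio_pos _)]

lemma gy_abs (α j : ℕ) : |gy α j| = |goldenConj| ^ (α + 2 * j) := by
  rw [gy, abs_mul, abs_pow, abs_neg, abs_one, one_pow, one_mul, abs_pow]

lemma abs_goldConj_lt_one : |goldenConj| < 1 := by
  rw [abs_of_neg goldenConj_neg]
  linarith [neg_one_lt_goldenConj]

lemma gx_inj_nat (α : ℕ) {i k : ℕ} (h : gx α i = gx α k) : i = k := by
  have habs : goldenRatio ^ (α + 2 * i) = goldenRatio ^ (α + 2 * k) := by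
    rw [← gx_abs, ← gx_abs, h]
  have hmono : StrictMono fun m : ℕ => goldenRatio ^ m := fun a b hab =>
    pow_lt_pow_right₀ one_lt_goldenRatio hab
  have := hmono.injective habs
  omega

lemma gy_inj_nat (α : ℕ) {i k : ℕ} (h : gy α i = gy α k) : i = k := by
  have habs : |goldenConj| ^ (α + 2 * i) = |goldenConj| ^ (α + 2 * k) := by
    rw [← gy_abs, ← gy_abs, h]
  have hpos : 0 < |goldenConj| := abs_pos.mpr goldenConj_ne_zero
  have hanti : StrictAnti fun m : ℕ => |goldenConj| ^ m := fun a b hab =>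
    pow_lt_pow_right_of_lt_one₀ hpos abs_goldConj_lt_one hab
  have := hanti.injective habs
  omega

lemma gx_ne_gy (α : ℕ) (hα : 1 ≤ α) (i j : ℕ) : gx α i ≠ gy α j := by
  intro h
  have h1 : (1 : ℝ) < |gx α i| := by
    rw [gx_abs]
    exact one_lt_pow₀ one_lt_goldenRatio (by omega)
  have h2 : |gy α j| < 1 := by
    rw [gy_abs]
    exact pow_lt_one₀ (abs_nonneg _) abs_goldConj_lt_one (by omega)
  rw [h] at h1
  linarith

/-! ### Parity helpers -/

lemma npc (a b : ℕ) (h : a % 2 = b % 2) : ((-1 : ℝ)) ^ a = (-1) ^ b := by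
  conv_lhs => rw [← Nat.div_add_mod a 2]
  conv_rhs => rw [← Nat.div_add_mod b 2]
  rw [pow_add, pow_add, pow_mul, pow_mul, h]
  norm_num

lemma neg_one_pow_sub_sub (a b c : ℕ) (h : b + c ≤ a) :
    ((-1 : ℝ)) ^ (a - b - c) = (-1) ^ a * (-1) ^ b * (-1) ^ c := by
  rw [← pow_add, ← pow_add]
  exact npc _ _ (by omega)

lemma phi_psi_pow (m : ℕ) : goldenRatio ^ m * goldenConj ^ m = (-1 : ℝ) ^ m := by
  rw [← mul_pow, goldenRatio_mul_goldenConj]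

/-! ### The scalar power/sign identity -/

lemma COMB (α n j l u v : ℕ) (hu : n = l + u) (hv : n = j + v) :
    (-1 : ℝ) ^ n *
      ((-1 : ℝ) ^ ((n+1) * j + SS (n+1)) * goldenRatio ^ (SS (n+1)) *
        goldenConj ^ ((n+1) * j) * Real.sqrt 5 ^ (n+1)) *
      ((-1 : ℝ) ^ ((n+1) * l + SS (n+1)) * goldenRatio ^ ((n+1) * l) *
        goldenConj ^ (SS (n+1)) * Real.sqrt 5 ^ (n+1)) =
    ((-1 : ℝ) ^ j * goldenConj ^ j) * (Real.sqrt 5 * (-1 : ℝ) ^ l * goldenRatio ^ l) *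
      (Real.sqrt 5 * (-1 : ℝ) ^ (l + j) * goldenRatio ^ l * goldenConj ^ j) *
      ((-1 : ℝ) ^ (j * (j+1)) * goldenConj ^ (j * (α + j) + SS j) * Real.sqrt 5 ^ j) *
      ((-1 : ℝ) ^ (v * (j+1) + SS v) * goldenConj ^ (v * (α + 2*j + 1) + SS v) *
        Real.sqrt 5 ^ v) *
      ((-1 : ℝ) ^ (l * l) * goldenRatio ^ (l * (α + l) + SS l) * Real.sqrt 5 ^ l) *
      ((-1 : ℝ) ^ (u * l + SS u) * goldenRatio ^ (u * (α + 2*l + 1) + SS u) *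
        Real.sqrt 5 ^ u) *
      ((-1 : ℝ) ^ (n * (α + j + l)) * (-1 : ℝ) ^ (SS j) * (-1 : ℝ) ^ (SS l)) := by
  have hb : (l + l + ((l * (α + l) + SS l) + (u * (α + 2*l + 1) + SS u))) =
      (SS (n+1) + (n+1) * l) + n * α := by
    rw [hu, SS_add l u]
    ring
  have hc : (j + j + ((j * (α + j) + SS j) + (v * (α + 2*j + 1) + SS v))) =
      ((n+1) * j + SS (n+1)) + n * α := by
    rw [hv, SS_add j v]
    ring
  have hφψ := phi_psi_pow (n * α)
  have hsign : ((-1 : ℝ)) ^ (n + ((n+1) * j + SS (n+1)) + ((n+1) * l + SS (n+1))) =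
      (-1 : ℝ) ^ ((j + (l + (l + j)) + (j * (j+1) + (v * (j+1) + SS v)) +
        (l * l + (u * l + SS u)) + (n * (α + j + l) + (SS j + SS l))) + n * α) := by
    apply npc
    have hS1 := SS_add l u
    have hS2 : SS (l + u + 1) = SS j + SS v + j * v + j + v := by
      rw [show l + u + 1 = j + v + 1 from by omega]
      exact SS_add j v
    have hS3 : SS l + SS u + l * u + l + u = SS j + SS v + j * v + j + v :=
      hS1.symm.trans hS2
    have h7 : 2 ∣ j * j + j := by
      have := Nat.even_mul_succ_self j
      rw [Nat.mul_succ] at this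
      exact this.two_dvd
    have h8 : 2 ∣ l * l + l := by
      have := Nat.even_mul_succ_self l
      rw [Nat.mul_succ] at this
      exact this.two_dvd
    rw [hu, hS1]
    rw [show (l + u + 1) * j = l * j + u * j + j from by ring,
      show (l + u + 1) * l = l * l + u * l + l from by ring,
      show j * (j + 1) = j * j + j from by ring,
      show v * (j + 1) = v * j + v from by ring,
      show (l + u) * (α + j + l) = l * α + u * α + l * j + u * j + l * l + u * l from by ring,
      show (l + u) * α = l * α + u * α from by ring,
      show v * j = j * v from by ring,
      show u * l = l * u from by ring]
    clear hS1 hS2 hφψ hb hc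
    generalize l * j = m1 at *
    generalize u * j = m2 at *
    generalize l * l = m3 at *
    generalize l * u = m4 at *
    generalize j * j = m5 at *
    generalize j * v = m6 at *
    generalize l * α = m7 at *
    generalize u * α = m8 at *
    omega
  calc (-1 : ℝ) ^ n *
      ((-1 : ℝ) ^ ((n+1) * j + SS (n+1)) * goldenRatio ^ (SS (n+1)) *
        goldenConj ^ ((n+1) * j) * Real.sqrt 5 ^ (n+1)) *
      ((-1 : ℝ) ^ ((n+1) * l + SS (n+1)) * goldenRatio ^ ((n+1) * l) *
        goldenConj ^ (SS (n+1)) * Real.sqrt 5 ^ (n+1))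
      = (-1 : ℝ) ^ (n + ((n+1) * j + SS (n+1)) + ((n+1) * l + SS (n+1))) *
        goldenRatio ^ (SS (n+1) + (n+1) * l) * goldenConj ^ ((n+1) * j + SS (n+1)) *
        Real.sqrt 5 ^ ((n+1) + (n+1)) := by ring
    _ = (-1 : ℝ) ^ ((j + (l + (l + j)) + (j * (j+1) + (v * (j+1) + SS v)) +
          (l * l + (u * l + SS u)) + (n * (α + j + l) + (SS j + SS l))) + n * α) *
        goldenRatio ^ (SS (n+1) + (n+1) * l) * goldenConj ^ ((n+1) * j + SS (n+1)) *
        Real.sqrt 5 ^ ((n+1) + (n+1)) := by rw [hsign]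
    _ = (-1 : ℝ) ^ (j + (l + (l + j)) + (j * (j+1) + (v * (j+1) + SS v)) +
          (l * l + (u * l + SS u)) + (n * (α + j + l) + (SS j + SS l))) *
        (goldenRatio ^ (n * α) * goldenConj ^ (n * α)) *
        goldenRatio ^ (SS (n+1) + (n+1) * l) * goldenConj ^ ((n+1) * j + SS (n+1)) *
        Real.sqrt 5 ^ ((n+1) + (n+1)) := by
        rw [pow_add, hφψ]
        try ring
    _ = (-1 : ℝ) ^ (j + (l + (l + j)) + (j * (j+1) + (v * (j+1) + SS v)) +
          (l * l + (u * l + SS u)) + (n * (α + j + l) + (SS j + SS l))) *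
        goldenRatio ^ ((SS (n+1) + (n+1) * l) + n * α) *
        goldenConj ^ (((n+1) * j + SS (n+1)) + n * α) *
        Real.sqrt 5 ^ ((n+1) + (n+1)) := by
        rw [pow_add goldenRatio, pow_add goldenConj]
        ring
    _ = _ := by
        rw [← hb, ← hc, show (n+1) + (n+1) = 1 + 1 + (j + v) + (l + u) from by omega]
        ring

/-! ### Key identity -/

lemma choose2_le (α n j l : ℕ) (hj : j ≤ n) (hl : l ≤ n) :
    Nat.choose j 2 + Nat.choose l 2 ≤ n * (α + j + l) := by
  have h1 : Nat.choose j 2 ≤ n * j := by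
    rw [← SS_choose, SS]
    calc ∑ k ∈ Finset.range j, k ≤ ∑ _k ∈ Finset.range j, n :=
          Finset.sum_le_sum fun k hk => le_of_lt (lt_of_lt_of_le (Finset.mem_range.mp hk) hj)
      _ = j * n := by rw [Finset.sum_const, Finset.card_range, smul_eq_mul]
      _ = n * j := mul_comm _ _
  have h2 : Nat.choose l 2 ≤ n * l := by
    rw [← SS_choose, SS]
    calc ∑ k ∈ Finset.range l, k ≤ ∑ _k ∈ Finset.range l, n :=
          Finset.sum_le_sum fun k hk => le_of_lt (lt_of_lt_of_le (Finset.mem_range.mp hk) hl)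
      _ = l * n := by rw [Finset.sum_const, Finset.card_range, smul_eq_mul]
      _ = n * l := mul_comm _ _
  have h3 : n * (α + j + l) = n * α + n * j + n * l := by ring
  generalize n * j = A at *
  generalize n * l = B at *
  generalize n * α = C at *
  omega

lemma key_range (α n j l u v : ℕ) (hα : 1 ≤ α) (hj : j ≤ n) (hl : l ≤ n)
    (hu : n = l + u) (hv : n = j + v) :
    (-1 : ℝ) ^ n * (∏ k ∈ Finset.range (n+1), (gx α k - gy α j)) *
      (∏ k ∈ Finset.range (n+1), (gx α l - gy α k)) =
    ((-1 : ℝ) ^ j * goldenConj ^ j) * (Real.sqrt 5 * (-1 : ℝ) ^ l * goldenRatio ^ l) *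
      ((-1 : ℝ) ^ (n * (α + j + l) - Nat.choose j 2 - Nat.choose l 2) *
        (Nat.fib (α + j + l) : ℝ) * fibinom (α + n + j) (n - l) * fibinom (α + n + l) (n - j) *
        fibinom (α + j + l - 1) j * fibinom (α + j + l - 1) l) *
      (∏ k ∈ (Finset.range (n+1)).erase j, (gy α j - gy α k)) *
      (∏ k ∈ (Finset.range (n+1)).erase l, (gx α l - gx α k)) *
      (gx α l - gy α j) := by
  have hfib1 : (0 : ℝ) < (Nat.fib (α + l + j) : ℝ) := fib_cast_pos (by omega)
  have hfib2 : (0 : ℝ) < (Nat.fib (α + j + l) : ℝ) := fib_cast_pos (by omega)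
  have hZZ : ((QF v * QF j * (Nat.fib (α + l + j) : ℝ)) *
      (QF u * QF l * (Nat.fib (α + j + l) : ℝ))) ≠ 0 :=
    (mul_pos (mul_pos (mul_pos (QF_pos v) (QF_pos j)) hfib1)
      (mul_pos (mul_pos (QF_pos u) (QF_pos l)) hfib2)).ne'
  apply mul_right_cancel₀ hZZ
  -- closed forms for the erase-products
  have hP3 := P3 α l u
  rw [show l + u + 1 = n + 1 from by omega] at hP3
  have hP4 := P4 α j v
  rw [show j + v + 1 = n + 1 from by omega] at hP4
  -- sign splitting
  have hsplit : (-1 : ℝ) ^ (n * (α + j + l) - Nat.choose j 2 - Nat.choose l 2) =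
      (-1 : ℝ) ^ (n * (α + j + l)) * (-1 : ℝ) ^ (SS j) * (-1 : ℝ) ^ (SS l) := by
    rw [neg_one_pow_sub_sub _ _ _ (choose2_le α n j l hj hl), SS_choose, SS_choose]
  -- fibonomial pair identities
  have hA := grp α n j l hα hj
  rw [show n - j = v from by omega] at hA
  have hA2 := grp α n l j hα hl
  rw [show n - l = u from by omega, show α + l + j - 1 = α + j + l - 1 from by omega] at hA2
  rw [P1 α l (n+1), P2 α j (n+1), hP3, hP4, gsub1 α l j, hsplit,
    show n - l = u from by omega, show n - j = v from by omega]
  calc ((-1 : ℝ) ^ n *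
        ((-1 : ℝ) ^ ((n+1) * j + SS (n+1)) * goldenRatio ^ (SS (n+1)) *
          goldenConj ^ ((n+1) * j) * Real.sqrt 5 ^ (n+1) * PF (α + j) (n+1)) *
        ((-1 : ℝ) ^ ((n+1) * l + SS (n+1)) * goldenRatio ^ ((n+1) * l) *
          goldenConj ^ (SS (n+1)) * Real.sqrt 5 ^ (n+1) * PF (α + l) (n+1))) *
      ((QF v * QF j * (Nat.fib (α + l + j) : ℝ)) *
        (QF u * QF l * (Nat.fib (α + j + l) : ℝ)))
      = ((-1 : ℝ) ^ n *
        ((-1 : ℝ) ^ ((n+1) * j + SS (n+1)) * goldenRatio ^ (SS (n+1)) *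
          goldenConj ^ ((n+1) * j) * Real.sqrt 5 ^ (n+1)) *
        ((-1 : ℝ) ^ ((n+1) * l + SS (n+1)) * goldenRatio ^ ((n+1) * l) *
          goldenConj ^ (SS (n+1)) * Real.sqrt 5 ^ (n+1))) *
        (PF (α + j) (n+1) * PF (α + l) (n+1) *
          ((QF v * QF j * (Nat.fib (α + l + j) : ℝ)) *
            (QF u * QF l * (Nat.fib (α + j + l) : ℝ)))) := by ring
    _ = (((-1 : ℝ) ^ j * goldenConj ^ j) * (Real.sqrt 5 * (-1 : ℝ) ^ l * goldenRatio ^ l) *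
        (Real.sqrt 5 * (-1 : ℝ) ^ (l + j) * goldenRatio ^ l * goldenConj ^ j) *
        ((-1 : ℝ) ^ (j * (j+1)) * goldenConj ^ (j * (α + j) + SS j) * Real.sqrt 5 ^ j) *
        ((-1 : ℝ) ^ (v * (j+1) + SS v) * goldenConj ^ (v * (α + 2*j + 1) + SS v) *
          Real.sqrt 5 ^ v) *
        ((-1 : ℝ) ^ (l * l) * goldenRatio ^ (l * (α + l) + SS l) * Real.sqrt 5 ^ l) *
        ((-1 : ℝ) ^ (u * l + SS u) * goldenRatio ^ (u * (α + 2*l + 1) + SS u) *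
          Real.sqrt 5 ^ u) *
        ((-1 : ℝ) ^ (n * (α + j + l)) * (-1 : ℝ) ^ (SS j) * (-1 : ℝ) ^ (SS l))) *
        (PF (α + j) (n+1) * PF (α + l) (n+1) *
          ((QF v * QF j * (Nat.fib (α + l + j) : ℝ)) *
            (QF u * QF l * (Nat.fib (α + j + l) : ℝ)))) := by
        rw [COMB α n j l u v hu hv]
    _ = _ := by
        rw [← hA, ← hA2]
        ring

lemma sum_term (ca cb dc t B : ℝ) (hd : dc ≠ 0) :
    (ca * dc * t) * (dc⁻¹ * B * cb⁻¹) = (ca * cb⁻¹) * (t * B) := by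
  calc (ca * dc * t) * (dc⁻¹ * B * cb⁻¹) = (dc * dc⁻¹) * ((ca * cb⁻¹) * (t * B)) := by ring
    _ = (ca * cb⁻¹) * (t * B) := by rw [mul_inv_cancel₀ hd, one_mul]

lemma inv_sandwich (r d c : ℝ) (hd : d ≠ 0) (hc : c ≠ 0) :
    r = d⁻¹ * (d * c * r) * c⁻¹ := by
  field_simp

lemma fin_prod_erase {N : ℕ} (f : ℕ → ℝ) (m : Fin N) :
    ∏ k ∈ Finset.univ.erase m, f (k : ℕ) = ∏ k ∈ (Finset.range N).erase (m : ℕ), f k := by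
  rw [← Finset.prod_image (fun x _ y _ h => Fin.ext h)]
  congr 1
  ext a
  simp only [Finset.mem_image, Finset.mem_erase, Finset.mem_range, Finset.mem_univ, true_and,
    and_true]
  constructor
  · rintro ⟨b, hb, rfl⟩
    exact ⟨fun h => hb (Fin.ext h), b.isLt⟩
  · rintro ⟨ha, hlt⟩
    exact ⟨⟨a, hlt⟩, fun h => ha (congrArg Fin.val h), rfl⟩

theorem filbert_inverse_entries (α : ℕ) (hα : 1 ≤ α) (n : ℕ) (i j : Fin (n + 1)) :
    (Matrix.of fun i j : Fin (n + 1) =>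
          (1 : ℝ) / (Nat.fib (α + (i : ℕ) + (j : ℕ)) : ℝ))⁻¹ i j =
        (-1 : ℝ) ^ (n * (α + (i : ℕ) + (j : ℕ)) - Nat.choose (i : ℕ) 2 -
              Nat.choose (j : ℕ) 2) *
          (Nat.fib (α + (i : ℕ) + (j : ℕ)) : ℝ) *
          fibinom (α + n + (i : ℕ)) (n - (j : ℕ)) * fibinom (α + n + (j : ℕ)) (n - (i : ℕ)) *
          fibinom (α + (i : ℕ) + (j : ℕ) - 1) (i : ℕ) *
          fibinom (α + (i : ℕ) + (j : ℕ) - 1) (j : ℕ) ∧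
      ∃ z : ℤ,
        (Matrix.of fun i j : Fin (n + 1) =>
            (1 : ℝ) / (Nat.fib (α + (i : ℕ) + (j : ℕ)) : ℝ))⁻¹ i j = (z : ℝ) := by
  classical
  set xv : Fin (n+1) → ℝ := fun k => gx α (k : ℕ) with hxv
  set yv : Fin (n+1) → ℝ := fun k => gy α (k : ℕ) with hyv
  have hxinj : Function.Injective xv := fun a b h => Fin.ext (gx_inj_nat α h)
  have hyinj : Function.Injective yv := fun a b h => Fin.ext (gy_inj_nat α h)
  have hxy : ∀ a b : Fin (n+1), xv a ≠ yv b := fun a b => gx_ne_gy α hα _ _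
  have hCB := cauchy_mul_eq_one xv yv hxinj hyinj hxy
  set R : Matrix (Fin (n+1)) (Fin (n+1)) ℝ := Matrix.of fun i j : Fin (n + 1) =>
    (-1 : ℝ) ^ (n * (α + (i : ℕ) + (j : ℕ)) - Nat.choose (i : ℕ) 2 - Nat.choose (j : ℕ) 2) *
      (Nat.fib (α + (i : ℕ) + (j : ℕ)) : ℝ) *
      fibinom (α + n + (i : ℕ)) (n - (j : ℕ)) * fibinom (α + n + (j : ℕ)) (n - (i : ℕ)) *
      fibinom (α + (i : ℕ) + (j : ℕ) - 1) (i : ℕ) *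
      fibinom (α + (i : ℕ) + (j : ℕ) - 1) (j : ℕ) with hRdef
  have hcc : ∀ k : Fin (n+1), (Real.sqrt 5 * (-1 : ℝ) ^ (k : ℕ) * goldenRatio ^ (k : ℕ)) ≠ 0 := by
    intro k
    have h5 : (0:ℝ) < Real.sqrt 5 := by positivity
    exact mul_ne_zero (mul_ne_zero h5.ne' (by positivity)) (pow_ne_zero _ goldenRatio_ne_zero)
  have hdd : ∀ k : Fin (n+1), ((-1 : ℝ) ^ (k : ℕ) * goldenConj ^ (k : ℕ)) ≠ 0 := fun k =>
    mul_ne_zero (by positivity) (pow_ne_zero _ goldenConj_ne_zero)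
  -- the heavy entrywise identity
  have hRB : ∀ jf lf : Fin (n+1), R jf lf =
      ((-1 : ℝ) ^ (jf : ℕ) * goldenConj ^ (jf : ℕ))⁻¹ *
        ((∏ k ∈ Finset.univ.erase lf, (yv jf - xv k)) * (∏ k : Fin (n+1), (xv lf - yv k)) /
          ((∏ k ∈ Finset.univ.erase jf, (yv jf - yv k)) *
            (∏ k ∈ Finset.univ.erase lf, (xv lf - xv k)))) *
        (Real.sqrt 5 * (-1 : ℝ) ^ (lf : ℕ) * goldenRatio ^ (lf : ℕ))⁻¹ := by
    intro jf lf
    set jn := (jf : ℕ) with hjn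
    set ln := (lf : ℕ) with hln
    have hj : jn ≤ n := Nat.lt_succ_iff.mp jf.isLt
    have hl : ln ≤ n := Nat.lt_succ_iff.mp lf.isLt
    have key := key_range α n jn ln (n - ln) (n - jn) hα hj hl (by omega) (by omega)
    -- convert the Fin products to range products
    have c1 : ∏ k ∈ Finset.univ.erase lf, (yv jf - xv k) =
        ∏ k ∈ (Finset.range (n+1)).erase ln, (gy α jn - gx α k) :=
      fin_prod_erase (fun k => gy α jn - gx α k) lf
    have c2 : ∏ k : Fin (n+1), (xv lf - yv k) =
        ∏ k ∈ Finset.range (n+1), (gx α ln - gy α k) :=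
      Fin.prod_univ_eq_prod_range (fun k => gx α ln - gy α k) (n+1)
    have c3 : ∏ k ∈ Finset.univ.erase jf, (yv jf - yv k) =
        ∏ k ∈ (Finset.range (n+1)).erase jn, (gy α jn - gy α k) :=
      fin_prod_erase (fun k => gy α jn - gy α k) jf
    have c4 : ∏ k ∈ Finset.univ.erase lf, (xv lf - xv k) =
        ∏ k ∈ (Finset.range (n+1)).erase ln, (gx α ln - gx α k) :=
      fin_prod_erase (fun k => gx α ln - gx α k) lf
    have hmem : ln ∈ Finset.range (n+1) := Finset.mem_range.mpr lf.isLt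
    have c6 : ∏ k ∈ (Finset.range (n+1)).erase ln, (gy α jn - gx α k) =
        (-1 : ℝ) ^ n * ∏ k ∈ (Finset.range (n+1)).erase ln, (gx α k - gy α jn) := by
      have : ∀ k ∈ (Finset.range (n+1)).erase ln, gy α jn - gx α k =
          (-1) * (gx α k - gy α jn) := fun k _ => by ring
      rw [Finset.prod_congr rfl this, Finset.prod_mul_distrib, Finset.prod_const,
        Finset.card_erase_of_mem hmem, Finset.card_range]
      norm_num
    have c7 : (∏ k ∈ (Finset.range (n+1)).erase ln, (gx α k - gy α jn)) *
        (gx α ln - gy α jn) = ∏ k ∈ Finset.range (n+1), (gx α k - gy α jn) :=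
      Finset.prod_erase_mul _ _ hmem
    have hDj : (∏ k ∈ (Finset.range (n+1)).erase jn, (gy α jn - gy α k)) ≠ 0 :=
      Finset.prod_ne_zero_iff.mpr fun k hk =>
        sub_ne_zero_of_ne fun h => (Finset.mem_erase.mp hk).1 (gy_inj_nat α h).symm
    have hDl : (∏ k ∈ (Finset.range (n+1)).erase ln, (gx α ln - gx α k)) ≠ 0 :=
      Finset.prod_ne_zero_iff.mpr fun k hk =>
        sub_ne_zero_of_ne fun h => (Finset.mem_erase.mp hk).1 (gx_inj_nat α h).symm
    have hsub : gx α ln - gy α jn ≠ 0 := sub_ne_zero_of_ne (gx_ne_gy α hα _ _)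
    -- R entry
    have hRe : R jf lf = (-1 : ℝ) ^ (n * (α + jn + ln) - Nat.choose jn 2 - Nat.choose ln 2) *
        (Nat.fib (α + jn + ln) : ℝ) * fibinom (α + n + jn) (n - ln) *
        fibinom (α + n + ln) (n - jn) * fibinom (α + jn + ln - 1) jn *
        fibinom (α + jn + ln - 1) ln := by
      simp only [hRdef, Matrix.of_apply]
      rfl
    have keyB : (∏ k ∈ (Finset.range (n+1)).erase ln, (gy α jn - gx α k)) *
        (∏ k ∈ Finset.range (n+1), (gx α ln - gy α k)) =
        ((-1 : ℝ) ^ jn * goldenConj ^ jn) * (Real.sqrt 5 * (-1 : ℝ) ^ ln * goldenRatio ^ ln) *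
          (R jf lf) *
          ((∏ k ∈ (Finset.range (n+1)).erase jn, (gy α jn - gy α k)) *
            (∏ k ∈ (Finset.range (n+1)).erase ln, (gx α ln - gx α k))) := by
      apply mul_right_cancel₀ hsub
      rw [c6, hRe]
      linear_combination key + ((-1 : ℝ) ^ n *
        ∏ k ∈ Finset.range (n+1), (gx α ln - gy α k)) * c7
    rw [c1, c2, c3, c4, keyB, mul_div_cancel_right₀ _ (mul_ne_zero hDj hDl)]
    exact inv_sandwich _ _ _ (hdd jf) (hcc lf)
  -- assemble: M * R = 1
  have hMR : (Matrix.of fun i j : Fin (n + 1) =>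
      (1 : ℝ) / (Nat.fib (α + (i : ℕ) + (j : ℕ)) : ℝ)) * R = 1 := by
    ext a b
    rw [Matrix.mul_apply]
    have hMc : ∀ c : Fin (n+1), (Matrix.of fun i j : Fin (n + 1) =>
        (1 : ℝ) / (Nat.fib (α + (i : ℕ) + (j : ℕ)) : ℝ)) a c =
        (Real.sqrt 5 * (-1 : ℝ) ^ (a : ℕ) * goldenRatio ^ (a : ℕ)) *
          ((-1 : ℝ) ^ (c : ℕ) * goldenConj ^ (c : ℕ)) * (xv a - yv c)⁻¹ := by
      intro c
      have hs := gsub1 α (a : ℕ) (c : ℕ)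
      have hF : (Nat.fib (α + (a : ℕ) + (c : ℕ)) : ℝ) ≠ 0 := (fib_cast_pos (by omega)).ne'
      have h5 : Real.sqrt 5 ≠ 0 := by positivity
      simp only [Matrix.of_apply, hxv, hyv]
      rw [hs]
      rw [one_div]
      rw [show Real.sqrt 5 * (Nat.fib (α + (a:ℕ) + (c:ℕ)) : ℝ) * (-1 : ℝ) ^ ((a:ℕ) + (c:ℕ)) *
          goldenRatio ^ (a : ℕ) * goldenConj ^ (c : ℕ) =
          ((Real.sqrt 5 * (-1:ℝ) ^ (a:ℕ) * goldenRatio ^ (a:ℕ)) *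
            ((-1:ℝ) ^ (c:ℕ) * goldenConj ^ (c:ℕ))) * (Nat.fib (α + (a:ℕ) + (c:ℕ)) : ℝ)
          from by ring]
      rw [mul_inv, ← mul_assoc, mul_inv_cancel₀ (mul_ne_zero (hcc a) (hdd c)), one_mul]
    calc ∑ c : Fin (n+1), (Matrix.of fun i j : Fin (n + 1) =>
          (1 : ℝ) / (Nat.fib (α + (i : ℕ) + (j : ℕ)) : ℝ)) a c * R c b
        = ∑ c : Fin (n+1), ((Real.sqrt 5 * (-1 : ℝ) ^ (a : ℕ) * goldenRatio ^ (a : ℕ)) *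
            (Real.sqrt 5 * (-1 : ℝ) ^ (b : ℕ) * goldenRatio ^ (b : ℕ))⁻¹) *
            ((Matrix.of fun p q : Fin (n+1) => (xv p - yv q)⁻¹) a c *
              (Matrix.of fun jj ll : Fin (n+1) =>
                ((∏ k ∈ Finset.univ.erase ll, (yv jj - xv k)) *
                  (∏ k : Fin (n+1), (xv ll - yv k))) /
                ((∏ k ∈ Finset.univ.erase jj, (yv jj - yv k)) *
                  (∏ k ∈ Finset.univ.erase ll, (xv ll - xv k)))) c b) := by
          refine Finset.sum_congr rfl fun c _ => ?_
          rw [hMc c, hRB c b]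
          simp only [Matrix.of_apply]
          exact sum_term _ _ _ _ _ (hdd c)
      _ = ((Real.sqrt 5 * (-1 : ℝ) ^ (a : ℕ) * goldenRatio ^ (a : ℕ)) *
            (Real.sqrt 5 * (-1 : ℝ) ^ (b : ℕ) * goldenRatio ^ (b : ℕ))⁻¹) *
          (((Matrix.of fun p q : Fin (n+1) => (xv p - yv q)⁻¹) *
            (Matrix.of fun jj ll : Fin (n+1) =>
                ((∏ k ∈ Finset.univ.erase ll, (yv jj - xv k)) *
                  (∏ k : Fin (n+1), (xv ll - yv k))) /
                ((∏ k ∈ Finset.univ.erase jj, (yv jj - yv k)) *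
                  (∏ k ∈ Finset.univ.erase ll, (xv ll - xv k))))) a b) := by
          rw [← Finset.mul_sum, Matrix.mul_apply]
      _ = (1 : Matrix (Fin (n+1)) (Fin (n+1)) ℝ) a b := by
          rw [hCB]
          rcases eq_or_ne a b with rfl | hab
          · rw [Matrix.one_apply_eq, mul_one, mul_inv_cancel₀ (hcc a)]
          · rw [Matrix.one_apply_ne hab, mul_zero]
  have hinv : (Matrix.of fun i j : Fin (n + 1) =>
      (1 : ℝ) / (Nat.fib (α + (i : ℕ) + (j : ℕ)) : ℝ))⁻¹ = R :=
    Matrix.inv_eq_right_inv hMR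
  constructor
  · rw [hinv]
    simp only [hRdef, Matrix.of_apply]
  · obtain ⟨z1, h1⟩ := fibinom_int (α + n + (i : ℕ)) (n - (j : ℕ))
    obtain ⟨z2, h2⟩ := fibinom_int (α + n + (j : ℕ)) (n - (i : ℕ))
    obtain ⟨z3, h3⟩ := fibinom_int (α + (i : ℕ) + (j : ℕ) - 1) (i : ℕ)
    obtain ⟨z4, h4⟩ := fibinom_int (α + (i : ℕ) + (j : ℕ) - 1) (j : ℕ)
    refine ⟨(-1) ^ (n * (α + (i : ℕ) + (j : ℕ)) - Nat.choose (i : ℕ) 2 - Nat.choose (j : ℕ) 2) *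
      (Nat.fib (α + (i : ℕ) + (j : ℕ)) : ℤ) * z1 * z2 * z3 * z4, ?_⟩
    rw [hinv]
    simp only [hRdef, Matrix.of_apply]
    rw [h1, h2, h3, h4]
    push_cast
    ring
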